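/- Let G be a simple graph on [d], B(G) = {0, ±e₁, …, ±e_d} ∪ {±e_i ± e_j : {i,j} ∈ E(G)}, B_G = conv(B(G)), and for ε ∈ {-1,1}^d let O_ε = {x ∈ ℝ^d : ε_i x_i ≥ 0 for all i}. Then B_G ∩ O_ε = conv(B(G) ∩ O_ε). -/
import Mathlib


open Finset

/-- The `i`-th standard unit vector in `ℝ^d`. -/
noncomputable def stdVec (d : ℕ) (i : Fin d) : Fin d → ℝ := Pi.single i 1

/-- The point configuration `B(G) = {0, ±e₁, …, ±e_d} ∪ {±e_i ± e_j : {i,j} ∈ E(G)}`. -/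
def BSet {d : ℕ} (G : SimpleGraph (Fin d)) : Set (Fin d → ℝ) :=
  {0} ∪ {x | ∃ i, x = stdVec d i ∨ x = -stdVec d i} ∪
    {x | ∃ i j, G.Adj i j ∧
      (x = stdVec d i + stdVec d j ∨ x = stdVec d i - stdVec d j ∨
       x = -stdVec d i + stdVec d j ∨ x = -stdVec d i - stdVec d j)}

section Aux

variable {d : ℕ} {G : SimpleGraph (Fin d)}

lemma stdVec_apply (i k : Fin d) : stdVec d i k = if k = i then 1 else 0 :=
  Pi.single_apply i 1 k

lemma zero_mem_BSet : (0 : Fin d → ℝ) ∈ BSet G := Or.inl (Or.inl rfl)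

lemma single_mem_BSet {s : ℝ} (hs : s = 1 ∨ s = -1) (i : Fin d) :
    (fun k => s * stdVec d i k) ∈ BSet G := by
  refine Or.inl (Or.inr ⟨i, ?_⟩)
  rcases hs with rfl | rfl
  · left; funext k; simp
  · right; funext k; simp

lemma pair_mem_BSet {s t : ℝ} (hs : s = 1 ∨ s = -1) (ht : t = 1 ∨ t = -1)
    {i j : Fin d} (hij : G.Adj i j) :
    (fun k => s * stdVec d i k + t * stdVec d j k) ∈ BSet G := by
  refine Or.inr ⟨i, j, hij, ?_⟩
  rcases hs with rfl | rfl <;> rcases ht with rfl | rfl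
  · exact Or.inl (by funext k; simp)
  · exact Or.inr (Or.inl (by funext k; simp only [Pi.sub_apply]; ring))
  · exact Or.inr (Or.inr (Or.inl (by funext k; simp only [Pi.add_apply, Pi.neg_apply]; ring)))
  · exact Or.inr (Or.inr (Or.inr (by funext k; simp only [Pi.sub_apply, Pi.neg_apply]; ring)))

lemma BSet_cases {v : Fin d → ℝ} (hv : v ∈ BSet G) :
    v = 0 ∨
    (∃ i, ∃ s : ℝ, (s = 1 ∨ s = -1) ∧ v = fun k => s * stdVec d i k) ∨
    (∃ i j, ∃ s t : ℝ, (s = 1 ∨ s = -1) ∧ (t = 1 ∨ t = -1) ∧ G.Adj i j ∧ i ≠ j ∧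
      v = fun k => s * stdVec d i k + t * stdVec d j k) := by
  rcases hv with (h | ⟨i, h | h⟩) | ⟨i, j, hij, h | h | h | h⟩
  · exact Or.inl h
  · exact Or.inr (Or.inl ⟨i, 1, Or.inl rfl, by funext k; simp [h]⟩)
  · exact Or.inr (Or.inl ⟨i, -1, Or.inr rfl, by funext k; simp [h]⟩)
  · exact Or.inr (Or.inr ⟨i, j, 1, 1, Or.inl rfl, Or.inl rfl, hij, hij.ne, by
      funext k; simp [h]⟩)
  · exact Or.inr (Or.inr ⟨i, j, 1, -1, Or.inl rfl, Or.inr rfl, hij, hij.ne, by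
      funext k; simp only [h, Pi.sub_apply]; ring⟩)
  · exact Or.inr (Or.inr ⟨i, j, -1, 1, Or.inr rfl, Or.inl rfl, hij, hij.ne, by
      funext k; simp only [h, Pi.add_apply, Pi.neg_apply]; ring⟩)
  · exact Or.inr (Or.inr ⟨i, j, -1, -1, Or.inr rfl, Or.inr rfl, hij, hij.ne, by
      funext k; simp only [h, Pi.sub_apply, Pi.neg_apply]; ring⟩)

/-- The ε-positive part of a vector. -/
noncomputable def Pmap (ε v : Fin d → ℝ) : Fin d → ℝ := fun k => if 0 ≤ ε k * v k then v k else 0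

lemma Pmap_orth (ε v : Fin d → ℝ) (k : Fin d) : 0 ≤ ε k * Pmap ε v k := by
  unfold Pmap; split_ifs with h
  · exact h
  · simp

lemma Pmap_ge (ε v : Fin d → ℝ) (k : Fin d) : ε k * v k ≤ ε k * Pmap ε v k := by
  unfold Pmap; split_ifs with h
  · exact le_rfl
  · rw [mul_zero]; linarith [lt_of_not_ge h]

lemma single_mem_orth {ε : Fin d → ℝ} {s : ℝ} {i : Fin d} (h : 0 ≤ ε i * s) :
    (fun k => s * stdVec d i k) ∈ {x : Fin d → ℝ | ∀ k, 0 ≤ ε k * x k} := by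
  intro k
  by_cases hk : k = i
  · subst hk; simpa [stdVec_apply] using h
  · simp [stdVec_apply, hk]

lemma Pmap_mem_BSet {ε : Fin d → ℝ} {v : Fin d → ℝ} (hv : v ∈ BSet G) :
    Pmap ε v ∈ BSet G := by
  rcases BSet_cases hv with rfl | ⟨i, s, hs, rfl⟩ | ⟨i, j, s, t, hs, ht, hadj, hij, rfl⟩
  · have : Pmap ε (0 : Fin d → ℝ) = 0 := by funext k; simp [Pmap]
    rw [this]; exact zero_mem_BSet
  · by_cases h : 0 ≤ ε i * s
    · have : Pmap ε (fun k => s * stdVec d i k) = fun k => s * stdVec d i k := by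
        funext k
        by_cases hk : k = i
        · subst hk; simp [Pmap, stdVec_apply, h]
        · simp [Pmap, stdVec_apply, hk]
      rw [this]; exact single_mem_BSet hs i
    · have : Pmap ε (fun k => s * stdVec d i k) = 0 := by
        funext k
        by_cases hk : k = i
        · subst hk; simp [Pmap, stdVec_apply, h]
        · simp [Pmap, stdVec_apply, hk]
      rw [this]; exact zero_mem_BSet
  · by_cases h1 : 0 ≤ ε i * s <;> by_cases h2 : 0 ≤ ε j * t
    · have : Pmap ε (fun k => s * stdVec d i k + t * stdVec d j k)
          = fun k => s * stdVec d i k + t * stdVec d j k := by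
        funext k
        by_cases hk : k = i
        · subst hk; simp [Pmap, stdVec_apply, hij, h1]
        · by_cases hk' : k = j
          · subst hk'; simp [Pmap, stdVec_apply, hk, h2]
          · simp [Pmap, stdVec_apply, hk, hk']
      rw [this]; exact pair_mem_BSet hs ht hadj
    · have : Pmap ε (fun k => s * stdVec d i k + t * stdVec d j k)
          = fun k => s * stdVec d i k := by
        funext k
        by_cases hk : k = i
        · subst hk; simp [Pmap, stdVec_apply, hij, h1]
        · by_cases hk' : k = j
          · subst hk'; simp [Pmap, stdVec_apply, hk, h2]
          · simp [Pmap, stdVec_apply, hk, hk']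
      rw [this]; exact single_mem_BSet hs i
    · have : Pmap ε (fun k => s * stdVec d i k + t * stdVec d j k)
          = fun k => t * stdVec d j k := by
        funext k
        by_cases hk : k = i
        · subst hk; simp [Pmap, stdVec_apply, hij, Ne.symm hij, h1]
        · by_cases hk' : k = j
          · subst hk'; simp [Pmap, stdVec_apply, hk, Ne.symm hij, h2]
          · simp [Pmap, stdVec_apply, hk, hk']
      rw [this]; exact single_mem_BSet ht j
    · have : Pmap ε (fun k => s * stdVec d i k + t * stdVec d j k) = 0 := by
        funext k
        by_cases hk : k = i
        · subst hk; simp [Pmap, stdVec_apply, hij, h1]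
        · by_cases hk' : k = j
          · subst hk'; simp [Pmap, stdVec_apply, hk, h2]
          · simp [Pmap, stdVec_apply, hk, hk']
      rw [this]; exact zero_mem_BSet

lemma scaled_mem {ε c v : Fin d → ℝ} (hc0 : ∀ k, 0 ≤ c k) (hc1 : ∀ k, c k ≤ 1)
    (hv : v ∈ BSet G ∩ {x | ∀ k, 0 ≤ ε k * x k}) :
    (fun k => c k * v k) ∈ convexHull ℝ (BSet G ∩ {x | ∀ k, 0 ≤ ε k * x k}) := by
  obtain ⟨hvB, hvO⟩ := hv
  have h0 : (0 : Fin d → ℝ) ∈ BSet G ∩ {x | ∀ k, 0 ≤ ε k * x k} :=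
    ⟨zero_mem_BSet, fun k => by simp⟩
  have hconv := convex_convexHull ℝ (BSet G ∩ {x : Fin d → ℝ | ∀ k, 0 ≤ ε k * x k})
  have hsub := subset_convexHull ℝ (BSet G ∩ {x : Fin d → ℝ | ∀ k, 0 ≤ ε k * x k})
  rcases BSet_cases hvB with rfl | ⟨i, s, hs, rfl⟩ | ⟨i, j, s, t, hs, ht, hadj, hij, rfl⟩
  · have : (fun k => c k * (0 : Fin d → ℝ) k) = (0 : Fin d → ℝ) := by funext k; simp
    rw [this]; exact hsub h0
  · have heq : (fun k => c k * (fun k => s * stdVec d i k) k)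
        = c i • (fun k => s * stdVec d i k) + (1 - c i) • (0 : Fin d → ℝ) := by
      funext k
      by_cases hk : k = i
      · subst hk; simp [stdVec_apply]
      · simp [stdVec_apply, hk]
    rw [heq]
    exact hconv (hsub ⟨hvB, hvO⟩) (hsub h0) (hc0 i) (by linarith [hc1 i]) (by ring)
  · -- pair case
    have hvi : 0 ≤ ε i * s := by
      have := hvO i; simpa [stdVec_apply, hij] using this
    have hvj : 0 ≤ ε j * t := by
      have := hvO j; simpa [stdVec_apply, Ne.symm hij] using this
    set m := min (c i) (c j) with hm
    have hm0 : 0 ≤ m := le_min (hc0 i) (hc0 j)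
    have hmi : m ≤ c i := min_le_left _ _
    have hmj : m ≤ c j := min_le_right _ _
    have hlast : 0 ≤ 1 - c i - c j + m := by
      rcases le_total (c i) (c j) with h | h
      · rw [hm, min_eq_left h]; linarith [hc1 j]
      · rw [hm, min_eq_right h]; linarith [hc1 i]
    have key : (∑ a : Fin 4, (![m, c i - m, c j - m, 1 - c i - c j + m] a) •
        (![(fun k => s * stdVec d i k + t * stdVec d j k),
           (fun k => s * stdVec d i k),
           (fun k => t * stdVec d j k),
           (0 : Fin d → ℝ)] a))
        ∈ convexHull ℝ (BSet G ∩ {x : Fin d → ℝ | ∀ k, 0 ≤ ε k * x k}) := by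
      apply hconv.sum_mem
      · intro a _
        fin_cases a <;> simp <;> linarith
      · simp [Fin.sum_univ_four]; ring
      · intro a _
        fin_cases a
        · exact hsub ⟨hvB, hvO⟩
        · exact hsub ⟨single_mem_BSet hs i, single_mem_orth hvi⟩
        · exact hsub ⟨single_mem_BSet ht j, single_mem_orth hvj⟩
        · exact hsub h0
    have heq : (fun k => c k * (fun k => s * stdVec d i k + t * stdVec d j k) k)
        = ∑ a : Fin 4, (![m, c i - m, c j - m, 1 - c i - c j + m] a) •
        (![(fun k => s * stdVec d i k + t * stdVec d j k),
           (fun k => s * stdVec d i k),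
           (fun k => t * stdVec d j k),
           (0 : Fin d → ℝ)] a) := by
      funext k
      simp only [Fin.sum_univ_four, Matrix.cons_val_zero, Matrix.cons_val_one, Matrix.head_cons,
        Matrix.cons_val_two, Matrix.tail_cons, Matrix.cons_val_three, Pi.add_apply,
        Pi.smul_apply, smul_eq_mul, Pi.zero_apply]
      by_cases hk : k = i
      · subst hk; simp [stdVec_apply, hij]; ring
      · by_cases hk' : k = j
        · subst hk'; simp [stdVec_apply, hk]; ring
        · simp [stdVec_apply, hk, hk']
    rw [heq]; exact key

end Aux

/-- Intersecting `B_G` with any closed orthant `O_ε` gives the convex hull of the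
points of `B(G)` lying in that orthant. -/
theorem stmt6 (d : ℕ) (G : SimpleGraph (Fin d)) (ε : Fin d → ℝ)
    (hε : ∀ i, ε i = 1 ∨ ε i = -1) :
    convexHull ℝ (BSet G) ∩ {x | ∀ i, 0 ≤ ε i * x i} =
      convexHull ℝ (BSet G ∩ {x | ∀ i, 0 ≤ ε i * x i}) := by
  have hconv := convex_convexHull ℝ (BSet G ∩ {x : Fin d → ℝ | ∀ i, 0 ≤ ε i * x i})
  apply Set.Subset.antisymm
  · rintro x ⟨hxB, hxO⟩
    rw [_root_.convexHull_eq] at hxB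
    obtain ⟨ι, t, w, z, hw0, hw1, hzB, hxc⟩ := hxB
    set y : Fin d → ℝ := ∑ a ∈ t, w a • Pmap ε (z a) with hy
    have hxs : x = ∑ a ∈ t, w a • z a := by
      rw [← hxc, Finset.centerMass_eq_of_sum_1 _ _ hw1]
    have hxk : ∀ k, x k = ∑ a ∈ t, w a * z a k := by
      intro k; rw [hxs]; simp [Finset.sum_apply]
    have hyk : ∀ k, y k = ∑ a ∈ t, w a * Pmap ε (z a) k := by
      intro k; rw [hy]; simp [Finset.sum_apply]
    have hle : ∀ k, ε k * x k ≤ ε k * y k := by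
      intro k
      rw [hxk, hyk, Finset.mul_sum, Finset.mul_sum]
      refine Finset.sum_le_sum fun a ha => ?_
      have hP := Pmap_ge ε (z a) k
      have hwa := hw0 a ha
      calc ε k * (w a * z a k) = w a * (ε k * z a k) := by ring
        _ ≤ w a * (ε k * Pmap ε (z a) k) := mul_le_mul_of_nonneg_left hP hwa
        _ = ε k * (w a * Pmap ε (z a) k) := by ring
    set c : Fin d → ℝ := fun k => if y k = 0 then 0 else x k / y k with hc
    have hbase : ∀ k, (0 ≤ c k ∧ c k ≤ 1) ∧ x k = c k * y k := by
      intro k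
      have hεne : ε k ≠ 0 := by rcases hε k with h | h <;> rw [h] <;> norm_num
      by_cases hyk0 : y k = 0
      · have hxk0 : x k = 0 := by
          have h1 := hxO k
          have h2 := hle k
          rw [hyk0, mul_zero] at h2
          have h3 : ε k * x k = 0 := le_antisymm h2 h1
          exact (mul_eq_zero.mp h3).resolve_left hεne
        constructor
        · constructor <;> simp [hc, hyk0]
        · simp [hc, hyk0, hxk0]
      · have hbpos : 0 < ε k * y k := by
          have hne : ε k * y k ≠ 0 := mul_ne_zero hεne hyk0
          exact lt_of_le_of_ne (le_trans (hxO k) (hle k)) (Ne.symm hne)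
        have hdiv : x k / y k = (ε k * x k) / (ε k * y k) := (mul_div_mul_left _ _ hεne).symm
        refine ⟨⟨?_, ?_⟩, ?_⟩
        · simp only [hc, if_neg hyk0]; rw [hdiv]
          exact div_nonneg (hxO k) hbpos.le
        · simp only [hc, if_neg hyk0]; rw [hdiv]
          exact (div_le_one hbpos).mpr (hle k)
        · simp only [hc, if_neg hyk0]
          rw [div_mul_cancel₀ _ hyk0]
    have hxeq : x = ∑ a ∈ t, w a • (fun k => c k * Pmap ε (z a) k) := by
      funext k
      rw [(hbase k).2, hyk k, Finset.mul_sum]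
      rw [Finset.sum_apply]
      refine Finset.sum_congr rfl fun a _ => ?_
      simp only [Pi.smul_apply, smul_eq_mul]
      ring
    rw [hxeq]
    refine hconv.sum_mem hw0 hw1 fun a ha => ?_
    exact scaled_mem (fun k => (hbase k).1.1) (fun k => (hbase k).1.2)
      ⟨Pmap_mem_BSet (hzB a ha), fun k => Pmap_orth ε (z a) k⟩
  · refine Set.subset_inter (convexHull_mono Set.inter_subset_left)
      (convexHull_min Set.inter_subset_right ?_)
    intro p hp q hq a b ha hb hab k
    have h1 : 0 ≤ a * (ε k * p k) := mul_nonneg ha (hp k)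
    have h2 : 0 ≤ b * (ε k * q k) := mul_nonneg hb (hq k)
    have : ε k * (a • p + b • q) k = a * (ε k * p k) + b * (ε k * q k) := by
      simp [Pi.add_apply, Pi.smul_apply, smul_eq_mul]; ring
    rw [this]; linarith
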